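/- Fix an integer n ≥ 1 and for integers i, j, t let M_{i,j}^t be the real matrix, with rows and columns indexed by all subsets of {1,…,n}, whose (X,Y) entry is 1 if |X| = i, |Y| = j and |X∩Y| = t, and 0 otherwise. Then for all l, k, p ∈ {0,…,n}: M_{l,k}^p = Σ_{s=0}^{n} (−1)^{s−p} C(s,p) · M_{l,s}^s · M_{s,k}^s. -/

import Mathlib

open Matrix

/-- The matrix `M_{i,j}^t`, indexed by the subsets of `{1,…,n}`, with `(X,Y)` entry `1` iff
`|X| = i`, `|Y| = j` and `|X ∩ Y| = t`. (Integer parameters, so that degenerate values such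
as `i = −1` give the zero matrix.) -/
def Mmat (n : ℕ) (i j t : ℤ) : Matrix (Finset (Fin n)) (Finset (Fin n)) ℝ :=
  Matrix.of fun X Y =>
    if (X.card : ℤ) = i ∧ (Y.card : ℤ) = j ∧ ((X ∩ Y).card : ℤ) = t then 1 else 0

/-- The binomial inversion identity. -/
lemma key_sum (n m p : ℕ) (hm : m ≤ n) :
    ∑ s ∈ Finset.range (n + 1),
      (-1 : ℝ) ^ ((s : ℤ) - (p : ℤ)) * (s.choose p : ℝ) * (m.choose s : ℝ)
      = if m = p then 1 else 0 := by
  by_cases hpm : p ≤ m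
  · have h1 : ∑ s ∈ Finset.range (n + 1),
        (-1 : ℝ) ^ ((s : ℤ) - (p : ℤ)) * (s.choose p : ℝ) * (m.choose s : ℝ)
        = ∑ s ∈ Finset.Ico p (n + 1),
        (-1 : ℝ) ^ ((s : ℤ) - (p : ℤ)) * (s.choose p : ℝ) * (m.choose s : ℝ) := by
      rw [Finset.range_eq_Ico]
      refine (Finset.sum_subset (Finset.Ico_subset_Ico (Nat.zero_le p) le_rfl) ?_).symm
      intro s hs hns
      have hsp : s < p := by
        simp only [Finset.mem_Ico] at hs hns; omega
      simp [Nat.choose_eq_zero_of_lt hsp]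
    rw [h1, Finset.sum_Ico_eq_sum_range]
    have h2 : ∀ t, (-1 : ℝ) ^ (((p + t : ℕ) : ℤ) - (p : ℤ)) * ((p + t).choose p : ℝ)
          * (m.choose (p + t) : ℝ)
        = (m.choose p : ℝ) * ((-1 : ℝ) ^ t * ((m - p).choose t : ℝ)) := by
      intro t
      have he : ((p + t : ℕ) : ℤ) - (p : ℤ) = (t : ℤ) := by push_cast; ring
      rw [he, zpow_natCast]
      by_cases ht : p + t ≤ m
      · have hmc := Nat.choose_mul (n := m) (Nat.le_add_right p t)
        have hst : p + t - p = t := by omega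
        rw [hst] at hmc
        have : (m.choose (p + t) : ℝ) * ((p + t).choose p : ℝ)
            = (m.choose p : ℝ) * ((m - p).choose t : ℝ) := by
          exact_mod_cast congrArg (Nat.cast : ℕ → ℝ) hmc
        linear_combination ((-1 : ℝ) ^ t) * this
      · have h3 : m.choose (p + t) = 0 := Nat.choose_eq_zero_of_lt (by omega)
        have h4 : (m - p).choose t = 0 := Nat.choose_eq_zero_of_lt (by omega)
        simp [h3, h4]
    simp only [h2]
    rw [← Finset.mul_sum]
    have h5 : ∑ t ∈ Finset.range (n + 1 - p), (-1 : ℝ) ^ t * ((m - p).choose t : ℝ)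
        = ∑ t ∈ Finset.range (m - p + 1), (-1 : ℝ) ^ t * ((m - p).choose t : ℝ) := by
      refine (Finset.sum_subset (Finset.range_subset_range.2 (by omega)) ?_).symm
      intro t ht hnt
      have : m - p < t := by
        simp only [Finset.mem_range] at ht hnt; omega
      simp [Nat.choose_eq_zero_of_lt this]
    rw [h5]
    have hZ : ((∑ i ∈ Finset.range (m - p + 1), (-1 : ℤ) ^ i * ((m - p).choose i) : ℤ) : ℝ)
        = (((if m - p = 0 then 1 else 0) : ℤ) : ℝ) := by
      rw [Int.alternating_sum_range_choose]
    push_cast at hZ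
    rw [hZ]
    by_cases hmp : m = p
    · simp [hmp]
    · have : m - p ≠ 0 := by omega
      simp [hmp, this]
  · have hz : ∀ s ∈ Finset.range (n + 1),
        (-1 : ℝ) ^ ((s : ℤ) - (p : ℤ)) * (s.choose p : ℝ) * (m.choose s : ℝ) = 0 := by
      intro s _
      rcases le_or_gt p s with h | h
      · have : m < s := by omega
        simp [Nat.choose_eq_zero_of_lt this]
      · simp [Nat.choose_eq_zero_of_lt h]
    rw [Finset.sum_eq_zero hz]
    have : m ≠ p := by omega
    simp [this]

/-- Entry of the product `M_{l,s}^s * M_{s,k}^s`. -/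
lemma prod_entry (n l k s : ℕ) (X Y : Finset (Fin n)) :
    (Mmat n l s s * Mmat n s k s) X Y
      = if X.card = l ∧ Y.card = k then (((X ∩ Y).card.choose s : ℕ) : ℝ) else 0 := by
  rw [Matrix.mul_apply]
  have hterm : ∀ Z : Finset (Fin n),
      Mmat n l s s X Z * Mmat n s k s Z Y
      = if (X.card = l ∧ Y.card = k) ∧ (Z ⊆ X ∩ Y ∧ Z.card = s) then (1 : ℝ) else 0 := by
    intro Z
    simp only [Mmat, Matrix.of_apply]
    rw [ite_mul, one_mul, zero_mul, ← ite_and]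
    congr 1
    rw [eq_iff_iff]
    constructor
    · rintro ⟨⟨hX, hZ, hXZ⟩, _, hY, hZY⟩
      have hZc : Z.card = s := by exact_mod_cast hZ
      have hZX : Z ⊆ X := by
        have h1 : (X ∩ Z).card = s := by exact_mod_cast hXZ
        have := Finset.eq_of_subset_of_card_le (Finset.inter_subset_right (s₁ := X) (s₂ := Z))
          (by omega)
        rw [← this]; exact Finset.inter_subset_left
      have hZY' : Z ⊆ Y := by
        have h1 : (Z ∩ Y).card = s := by exact_mod_cast hZY
        have := Finset.eq_of_subset_of_card_le (Finset.inter_subset_left (s₁ := Z) (s₂ := Y))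
          (by omega)
        rw [← this]; exact Finset.inter_subset_right
      exact ⟨⟨by exact_mod_cast hX, by exact_mod_cast hY⟩,
        Finset.subset_inter hZX hZY', hZc⟩
    · rintro ⟨⟨hX, hY⟩, hZsub, hZc⟩
      have hZX : Z ⊆ X := hZsub.trans Finset.inter_subset_left
      have hZY : Z ⊆ Y := hZsub.trans Finset.inter_subset_right
      have h1 : X ∩ Z = Z := Finset.inter_eq_right.2 hZX
      have h2 : Z ∩ Y = Z := Finset.inter_eq_left.2 hZY
      refine ⟨⟨by exact_mod_cast hX, by exact_mod_cast hZc, by rw [h1]; exact_mod_cast hZc⟩,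
        by exact_mod_cast hZc, by exact_mod_cast hY, by rw [h2]; exact_mod_cast hZc⟩
  simp only [hterm]
  rw [Finset.sum_boole]
  by_cases hXY : X.card = l ∧ Y.card = k
  · rw [if_pos hXY]
    have hfilter : (Finset.univ.filter
          fun Z : Finset (Fin n) => (X.card = l ∧ Y.card = k) ∧ Z ⊆ X ∩ Y ∧ Z.card = s)
        = (X ∩ Y).powersetCard s := by
      ext Z
      simp [Finset.mem_powersetCard, hXY]
    rw [hfilter, Finset.card_powersetCard]
  · rw [if_neg hXY]
    have hfilter : (Finset.univ.filter
          fun Z : Finset (Fin n) => (X.card = l ∧ Y.card = k) ∧ Z ⊆ X ∩ Y ∧ Z.card = s)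
        = ∅ := by
      ext Z
      simp [hXY]
    rw [hfilter]
    simp

/-- for all `l, k, p ∈ {0,…,n}`,
`M_{l,k}^p = Σ_{s=0}^{n} (−1)^{s−p} C(s,p) · M_{l,s}^s · M_{s,k}^s`. -/
theorem statement12 (n : ℕ) (hn : 1 ≤ n) (l k p : ℕ) (hl : l ≤ n) (hk : k ≤ n)
    (hp : p ≤ n) :
    Mmat n l k p
      = ∑ s ∈ Finset.range (n + 1),
          ((-1 : ℝ) ^ ((s : ℤ) - (p : ℤ)) * (s.choose p : ℝ)) •
            (Mmat n l s s * Mmat n s k s) := by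
  ext X Y
  rw [Matrix.sum_apply]
  simp only [Matrix.smul_apply, prod_entry, smul_eq_mul]
  by_cases hXY : X.card = l ∧ Y.card = k
  · simp only [hXY, and_self, if_true]
    have hm : (X ∩ Y).card ≤ n := by
      calc (X ∩ Y).card ≤ X.card := Finset.card_le_card Finset.inter_subset_left
        _ = l := hXY.1
        _ ≤ n := hl
    have hks := key_sum n (X ∩ Y).card p hm
    rw [hks]
    simp only [Mmat, Matrix.of_apply, hXY.1, hXY.2, Nat.cast_inj, true_and]
  · simp only [hXY, if_false]
    have hL : Mmat n l k p X Y = 0 := by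
      simp only [Mmat, Matrix.of_apply]
      rw [if_neg]
      rintro ⟨h1, h2, _⟩
      exact hXY ⟨by exact_mod_cast h1, by exact_mod_cast h2⟩
    rw [hL]
    simp
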